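/- Let n ∈ ℕ be even and positive and r ∈ {1, …, n/2} with 3r(n − 2(r−1)) − 2n > 0, and let λ = 3r(n + 2(r−1))/(3r(n − 2(r−1)) − 2n). If r is bounded (r = O(1) as n → ∞), then λ − 1 = Θ(1); if r = O(√n) then λ ≤ 1 + C/r for some constant C, and hence λ^r ≤ e^C is bounded by a constant. -/

import Mathlib

open Filter

lemma lam_sub_one (x n : ℝ) (hD : 0 < 3 * x * (n - 2 * (x - 1)) - 2 * n) :
    3 * x * (n + 2 * (x - 1)) / (3 * x * (n - 2 * (x - 1)) - 2 * n) - 1 =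
      (12 * x * (x - 1) + 2 * n) / (3 * x * (n - 2 * (x - 1)) - 2 * n) := by
  rw [eq_div_iff hD.ne', sub_mul, div_mul_cancel₀ _ hD.ne']
  ring

set_option maxHeartbeats 1000000 in
/-- Asymptotic behavior of the drift base λ: for bounded `r` we have `λ - 1 = Θ(1)`,
and for `r = O(√n)` we have `λ ≤ 1 + C/r`, hence `λ^r ≤ e^C` is bounded. -/
theorem lambda_asymptotics
    (N r : ℕ → ℕ)
    (hcond : ∀ i, Even (N i) ∧ 0 < N i ∧ 1 ≤ r i ∧ r i ≤ N i / 2 ∧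
      0 < 3 * (r i : ℝ) * ((N i : ℝ) - 2 * ((r i : ℝ) - 1)) - 2 * (N i : ℝ))
    (hN : Tendsto N atTop atTop)
    (lam : ℕ → ℝ)
    (hlam : ∀ i, lam i = 3 * (r i : ℝ) * ((N i : ℝ) + 2 * ((r i : ℝ) - 1)) /
      (3 * (r i : ℝ) * ((N i : ℝ) - 2 * ((r i : ℝ) - 1)) - 2 * (N i : ℝ))) :
    ((∃ C : ℕ, ∀ i, r i ≤ C) →
        ∃ c₁ c₂ : ℝ, 0 < c₁ ∧ 0 < c₂ ∧
          ∀ᶠ i in atTop, c₁ ≤ lam i - 1 ∧ lam i - 1 ≤ c₂) ∧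
      ((∃ C : ℝ, ∀ i, (r i : ℝ) ≤ C * Real.sqrt (N i)) →
        ∃ C' : ℝ, 0 < C' ∧
          ∀ᶠ i in atTop, lam i ≤ 1 + C' / (r i : ℝ) ∧ lam i ^ (r i) ≤ Real.exp C') := by
  have hNR : Tendsto (fun i => (N i : ℝ)) atTop atTop :=
    tendsto_natCast_atTop_atTop.comp hN
  constructor
  · rintro ⟨C, hC⟩
    have hC1 : 1 ≤ C := le_trans (hcond 0).2.2.1 (hC 0)
    have hC1R : (1 : ℝ) ≤ (C : ℝ) := by exact_mod_cast hC1
    refine ⟨2 / (3 * C), 6, by positivity, by norm_num, ?_⟩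
    filter_upwards [hNR.eventually_ge_atTop (12 * (C : ℝ) ^ 2 + 1)] with i hn
    obtain ⟨-, -, hr1, -, hD⟩ := hcond i
    have hx1 : (1 : ℝ) ≤ (r i : ℝ) := by exact_mod_cast hr1
    have hxC : (r i : ℝ) ≤ (C : ℝ) := by exact_mod_cast hC i
    set x : ℝ := (r i : ℝ) with hxdef
    set n : ℝ := (N i : ℝ) with hndef
    have heq : lam i - 1 = (12 * x * (x - 1) + 2 * n) /
        (3 * x * (n - 2 * (x - 1)) - 2 * n) := by
      rw [hlam i]; exact lam_sub_one x n hD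
    rw [heq]
    constructor
    · rw [div_le_div_iff₀ (by positivity) hD]
      nlinarith [mul_le_mul_of_nonneg_right hxC (by nlinarith : (0:ℝ) ≤ n),
        mul_nonneg (by linarith : (0:ℝ) ≤ x) (by linarith : (0:ℝ) ≤ x - 1),
        mul_nonneg (by linarith : (0:ℝ) ≤ (C:ℝ)) (mul_nonneg (by linarith : (0:ℝ) ≤ x) (by linarith : (0:ℝ) ≤ x - 1))]
    · rw [div_le_iff₀ hD]
      nlinarith [mul_le_mul hxC hxC (by linarith) (by linarith),
        mul_le_mul_of_nonneg_right hx1 (by nlinarith : (0:ℝ) ≤ n)]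
  · rintro ⟨C, hC⟩
    have hs00 : (0:ℝ) ≤ Real.sqrt (N 0) := Real.sqrt_nonneg _
    have hCpos : 0 < C := by
      by_contra h
      push_neg at h
      have h1 : (1 : ℝ) ≤ (r 0 : ℝ) := by exact_mod_cast (hcond 0).2.2.1
      have := hC 0
      nlinarith [mul_nonpos_of_nonpos_of_nonneg h hs00]
    refine ⟨24 * C ^ 2 + 4, by positivity, ?_⟩
    filter_upwards [hNR.eventually_ge_atTop (144 * C ^ 2)] with i hn
    obtain ⟨-, -, hr1, -, hD⟩ := hcond i
    have hx1 : (1 : ℝ) ≤ (r i : ℝ) := by exact_mod_cast hr1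
    set x : ℝ := (r i : ℝ) with hxdef
    set n : ℝ := (N i : ℝ) with hndef
    have hx0 : (0 : ℝ) < x := by linarith
    have hn0 : (0 : ℝ) ≤ n := by positivity
    set s : ℝ := Real.sqrt n with hsdef
    have hs0 : (0 : ℝ) ≤ s := Real.sqrt_nonneg _
    have hs2 : s ^ 2 = n := Real.sq_sqrt hn0
    have hxs : x ≤ C * s := hC i
    have h12 : 12 * C ≤ s := by
      have : Real.sqrt (144 * C ^ 2) ≤ s := Real.sqrt_le_sqrt hn
      rwa [show (144 * C ^ 2 : ℝ) = (12 * C) ^ 2 by ring,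
        Real.sqrt_sq (by positivity)] at this
    -- 12x ≤ s^2
    have h12x : 12 * x ≤ s ^ 2 := by
      nlinarith [mul_le_mul_of_nonneg_right h12 hs0, mul_le_mul_of_nonneg_right hxs (by linarith : (0:ℝ) ≤ 12)]
    -- D ≥ x s² / 2
    have hD2 : x * s ^ 2 / 2 ≤ 3 * x * (n - 2 * (x - 1)) - 2 * n := by
      nlinarith [mul_le_mul_of_nonneg_left h12x hx0.le,
        mul_nonneg (by linarith : (0:ℝ) ≤ x - 1) (sq_nonneg s)]
    have hx2 : x ^ 2 ≤ C ^ 2 * s ^ 2 := by nlinarith [mul_le_mul hxs hxs hx0.le (by positivity)]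
    have hkey : lam i ≤ 1 + (24 * C ^ 2 + 4) / x := by
      have heq : lam i - 1 = (12 * x * (x - 1) + 2 * n) /
          (3 * x * (n - 2 * (x - 1)) - 2 * n) := by
        rw [hlam i]; exact lam_sub_one x n hD
      have : (12 * x * (x - 1) + 2 * n) / (3 * x * (n - 2 * (x - 1)) - 2 * n) ≤
          (24 * C ^ 2 + 4) / x := by
        rw [div_le_div_iff₀ hD hx0]
        nlinarith [mul_le_mul_of_nonneg_left hx2 hx0.le,
          mul_le_mul_of_nonneg_left hD2 (by positivity : (0:ℝ) ≤ 24 * C ^ 2 + 4),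
          sq_nonneg x]
      linarith [heq ▸ this]
    refine ⟨hkey, ?_⟩
    have hlam0 : 0 ≤ lam i := by
      rw [hlam i, ← hxdef, ← hndef]
      apply div_nonneg _ hD.le
      nlinarith [mul_nonneg hx0.le (show (0:ℝ) ≤ n + 2 * (x - 1) by linarith)]
    have hstep : lam i ^ r i ≤ (Real.exp ((24 * C ^ 2 + 4) / x)) ^ r i := by
      apply pow_le_pow_left₀ hlam0 _ (r i)
      have := Real.add_one_le_exp ((24 * C ^ 2 + 4) / x)
      linarith
    have hexp : (Real.exp ((24 * C ^ 2 + 4) / x)) ^ r i = Real.exp (24 * C ^ 2 + 4) := by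
      rw [← Real.exp_nat_mul, mul_div_cancel₀ _ (ne_of_gt hx0)]
    rw [hexp] at hstep
    exact hstep
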